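/- Let Z be a real n×n matrix and let S := (Z + Zᵀ)/2 with spectral decomposition S = UΓUᵀ, where U is orthogonal and Γ is diagonal with real entries. Then the minimum of ‖Z − R‖_F² over all positive semidefinite real n×n matrices R is attained at R = U·max(Γ, 0)·Uᵀ (the entrywise positive part of Γ), and this minimum equals ‖(Z − Zᵀ)/2‖_F² + Σ_{λ eigenvalue of S, λ < 0} λ² (counted with multiplicity). -/

import Mathlib

open Matrix

/-- The squared Frobenius norm of a real matrix. -/
def frobSq {n : ℕ} (A : Matrix (Fin n) (Fin n) ℝ) : ℝ := ∑ i, ∑ j, (A i j) ^ 2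

lemma frobSq_eq_trace {n : ℕ} (A : Matrix (Fin n) (Fin n) ℝ) :
    frobSq A = (Aᵀ * A).trace := by
  simp only [frobSq, Matrix.trace, Matrix.diag, Matrix.mul_apply, Matrix.transpose_apply, sq]
  exact Finset.sum_comm

lemma frobSq_conj {n : ℕ} {U : Matrix (Fin n) (Fin n) ℝ} (hU : Uᵀ * U = 1)
    (A : Matrix (Fin n) (Fin n) ℝ) : frobSq (U * A * Uᵀ) = frobSq A := by
  rw [frobSq_eq_trace, frobSq_eq_trace]
  have h1 : (U * A * Uᵀ)ᵀ * (U * A * Uᵀ) = U * (Aᵀ * A) * Uᵀ := by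
    simp only [Matrix.transpose_mul, Matrix.transpose_transpose, Matrix.mul_assoc]
    rw [← Matrix.mul_assoc Uᵀ U (A * Uᵀ), hU, one_mul]
  rw [h1, Matrix.trace_mul_cycle, hU, one_mul]

lemma frobSq_add {n : ℕ} (X Y : Matrix (Fin n) (Fin n) ℝ) :
    frobSq (X + Y) = frobSq X + 2 * (∑ i, ∑ j, X i j * Y i j) + frobSq Y := by
  have h : ∀ i j : Fin n, (X i j + Y i j) ^ 2
      = X i j ^ 2 + 2 * (X i j * Y i j) + Y i j ^ 2 := by intros; ring
  simp only [frobSq, Matrix.add_apply, h, Finset.sum_add_distrib, Finset.mul_sum]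

lemma cross_zero {n : ℕ} (X Y : Matrix (Fin n) (Fin n) ℝ)
    (hX : Xᵀ = -X) (hY : Yᵀ = Y) : (∑ i, ∑ j, X i j * Y i j) = 0 := by
  have key : ∀ i j : Fin n, X i j * Y i j = -(X j i * Y j i) := by
    intro i j
    have h1 : X i j = -X j i := by
      have := congrFun (congrFun hX j) i
      simpa [Matrix.transpose_apply] using this
    have h2 : Y i j = Y j i := by
      have := congrFun (congrFun hY j) i
      simpa [Matrix.transpose_apply] using this
    rw [h1, h2]; ring
  have h : (∑ i, ∑ j, X i j * Y i j) = -∑ i, ∑ j, X i j * Y i j := by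
    calc (∑ i, ∑ j, X i j * Y i j) = ∑ i, ∑ j, -(X j i * Y j i) :=
          Finset.sum_congr rfl fun i _ => Finset.sum_congr rfl fun j _ => key i j
      _ = -∑ i, ∑ j, X j i * Y j i := by
          simp only [Finset.sum_neg_distrib]
      _ = -∑ j, ∑ i, X j i * Y j i := by rw [Finset.sum_comm]
  linarith

lemma frobSq_diagonal {n : ℕ} (f : Fin n → ℝ) :
    frobSq (Matrix.diagonal f) = ∑ i, f i ^ 2 := by
  simp only [frobSq, Matrix.diagonal_apply]
  refine Finset.sum_congr rfl fun i _ => ?_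
  rw [Finset.sum_eq_single i]
  · simp
  · intro j _ hj; simp [hj.symm]
  · simp

theorem psd_projection {n : ℕ} (Z U : Matrix (Fin n) (Fin n) ℝ) (d : Fin n → ℝ)
    (hU : Uᵀ * U = 1)
    (hS : (2 : ℝ)⁻¹ • (Z + Zᵀ) = U * Matrix.diagonal d * Uᵀ) :
    (U * Matrix.diagonal (fun i => max (d i) 0) * Uᵀ).PosSemidef ∧
    (∀ R : Matrix (Fin n) (Fin n) ℝ, R.PosSemidef →
      frobSq (Z - U * Matrix.diagonal (fun i => max (d i) 0) * Uᵀ) ≤ frobSq (Z - R)) ∧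
    frobSq (Z - U * Matrix.diagonal (fun i => max (d i) 0) * Uᵀ) =
      frobSq ((2 : ℝ)⁻¹ • (Z - Zᵀ)) + ∑ i, if d i < 0 then (d i) ^ 2 else 0 := by
  have hUH : Uᴴ = Uᵀ := Matrix.conjTranspose_eq_transpose_of_trivial U
  have hU' : U * Uᵀ = 1 := mul_eq_one_comm.mp hU
  set A : Matrix (Fin n) (Fin n) ℝ := (2:ℝ)⁻¹ • (Z - Zᵀ) with hAdef
  set S : Matrix (Fin n) (Fin n) ℝ := (2:ℝ)⁻¹ • (Z + Zᵀ) with hSdef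
  set R₀ : Matrix (Fin n) (Fin n) ℝ := U * Matrix.diagonal (fun i => max (d i) 0) * Uᵀ with hR0
  have hZ : Z = S + A := by
    ext i j
    simp only [hAdef, hSdef, Matrix.add_apply, Matrix.smul_apply, Matrix.sub_apply,
      Matrix.transpose_apply, smul_eq_mul]
    ring
  have hAanti : Aᵀ = -A := by
    ext i j
    simp only [hAdef, Matrix.transpose_apply, Matrix.neg_apply, Matrix.smul_apply,
      Matrix.sub_apply, smul_eq_mul]
    ring
  -- positive semidefiniteness of R₀
  have hdiagpsd : (Matrix.diagonal (fun i => max (d i) 0)).PosSemidef :=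
    Matrix.posSemidef_diagonal_iff.mpr fun i => le_max_right _ _
  have hR0psd : R₀.PosSemidef := by
    have := hdiagpsd.mul_mul_conjTranspose_same U
    rwa [hUH] at this
  refine ⟨hR0psd, ?_, ?_⟩
  -- value at R₀
  all_goals
    have hSR0 : S - R₀ = U * (Matrix.diagonal d - Matrix.diagonal fun i => max (d i) 0) * Uᵀ := by
      rw [hS, hR0]
      rw [Matrix.mul_sub, Matrix.sub_mul]
    have hval : frobSq (Z - R₀) = frobSq A + ∑ i, if d i < 0 then (d i) ^ 2 else 0 := by
      have hZR : Z - R₀ = A + (S - R₀) := by rw [hZ]; abel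
      have hsymm : (S - R₀)ᵀ = S - R₀ := by
        rw [hSR0]
        simp only [Matrix.transpose_mul, Matrix.transpose_sub, Matrix.transpose_transpose,
          Matrix.diagonal_transpose, Matrix.mul_assoc]
      have hdd : Matrix.diagonal d - Matrix.diagonal (fun i => max (d i) 0)
          = Matrix.diagonal (fun i => d i - max (d i) 0) := by
        rw [Matrix.diagonal_sub]
      rw [hZR, frobSq_add, cross_zero A (S - R₀) hAanti hsymm, mul_zero, add_zero,
        hSR0, frobSq_conj hU, hdd, frobSq_diagonal]
      congr 1
      refine Finset.sum_congr rfl fun i _ => ?_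
      rcases lt_or_ge (d i) 0 with h | h
      · rw [if_pos h, max_eq_right h.le, sub_zero]
      · rw [if_neg (not_lt.mpr h), max_eq_left h, sub_self]
        norm_num
  · -- minimality
    intro R hR
    rw [hval]
    have hRsym : Rᵀ = R := by
      have := hR.isHermitian
      rwa [Matrix.IsHermitian, Matrix.conjTranspose_eq_transpose_of_trivial] at this
    set M : Matrix (Fin n) (Fin n) ℝ := Uᵀ * R * U with hMdef
    have hMpsd : M.PosSemidef := by
      have := hR.conjTranspose_mul_mul_same U
      rwa [hUH] at this
    have hRM : R = U * M * Uᵀ := by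
      rw [hMdef]
      calc R = (U * Uᵀ) * R * (U * Uᵀ) := by rw [hU', one_mul, mul_one]
        _ = U * (Uᵀ * R * U) * Uᵀ := by simp only [Matrix.mul_assoc]
    have hMdiag : ∀ i, 0 ≤ M i i := by
      intro i
      exact hMpsd.diag_nonneg
    have hZR : Z - R = A + (S - R) := by rw [hZ]; abel
    have hsymm : (S - R)ᵀ = S - R := by
      rw [Matrix.transpose_sub, hRsym, hSdef]
      congr 1
      ext i j
      simp only [Matrix.transpose_apply, Matrix.smul_apply, Matrix.add_apply, smul_eq_mul]
      ring
    have hSRconj : S - R = U * (Matrix.diagonal d - M) * Uᵀ := by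
      rw [hS, hRM, Matrix.mul_sub, Matrix.sub_mul]
    rw [hZR, frobSq_add, cross_zero A (S - R) hAanti hsymm, mul_zero, add_zero,
      hSRconj, frobSq_conj hU]
    have hkey : (∑ i, if d i < 0 then (d i) ^ 2 else 0) ≤ frobSq (Matrix.diagonal d - M) := by
      rw [frobSq]
      refine Finset.sum_le_sum fun i _ => ?_
      have h1 : ((Matrix.diagonal d - M) i i) ^ 2 ≤
          ∑ j, ((Matrix.diagonal d - M) i j) ^ 2 := by
        exact Finset.single_le_sum (f := fun j => ((Matrix.diagonal d - M) i j) ^ 2)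
          (fun j _ => sq_nonneg _) (Finset.mem_univ i)
      refine le_trans ?_ h1
      have h2 : (Matrix.diagonal d - M) i i = d i - M i i := by
        simp [Matrix.diagonal_apply]
      rw [h2]
      rcases lt_or_ge (d i) 0 with h | h
      · rw [if_pos h]
        have : d i - M i i ≤ d i := by linarith [hMdiag i]
        nlinarith [hMdiag i]
      · rw [if_neg (not_lt.mpr h)]
        exact sq_nonneg _
    linarith
  · exact hval
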